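/- arXiv:2503.24299 — 3 statements merged into one kernel-verified Lean document; each statement's English description precedes it below -/
import Mathlib

section
/- Every finite directed graph D whose edges are labelled either 'positive' or 'negative', such that no cycle of D contains a negative edge, admits a stratification: a function σ from vertices to natural numbers such that for every nonempty path from z to z', σ(z) ≥ σ(z'), and if the path contains a negative edge then σ(z) > σ(z'). -/
/-- There is a (nonempty) path from `z` to `z'` containing a negative edge. -/
def NegPath {X : Type*} (E Eneg : X → X → Prop) (z z' : X) : Prop :=
  ∃ a b, Relation.ReflTransGen E z a ∧ Eneg a b ∧ Relation.ReflTransGen E b z'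

/-- Every finite directed graph whose edges are labelled positive or negative,
such that no cycle contains a negative edge, admits a stratification. -/
theorem exists_stratification {X : Type*} [Fintype X]
    (E Eneg : X → X → Prop) (hsub : ∀ a b, Eneg a b → E a b)
    (hstrat : ∀ z : X, ¬ NegPath E Eneg z z) :
    ∃ σ : X → ℕ,
      (∀ z z', Relation.TransGen E z z' → σ z' ≤ σ z) ∧
      (∀ z z', NegPath E Eneg z z' → σ z' < σ z) := by
  classical
  -- prepend a path to a NegPath
  have hpre : ∀ z z' b, Relation.ReflTransGen E z z' → NegPath E Eneg z' b →
      NegPath E Eneg z b := by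
    rintro z z' b hzz' ⟨a, c, h1, h2, h3⟩
    exact ⟨a, c, hzz'.trans h1, h2, h3⟩
  -- a NegPath gives a ReflTransGen path
  have hpath : ∀ z z', NegPath E Eneg z z' → Relation.ReflTransGen E z z' := by
    rintro z z' ⟨a, c, h1, h2, h3⟩
    exact (h1.tail (hsub a c h2)).trans h3
  refine ⟨fun z => (Finset.univ.filter (fun b => NegPath E Eneg z b)).card, ?_, ?_⟩
  · intro z z' h
    apply Finset.card_le_card
    intro b hb
    simp only [Finset.mem_filter, Finset.mem_univ, true_and] at hb ⊢
    exact hpre z z' b h.to_reflTransGen hb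
  · intro z z' h
    apply Finset.card_lt_card
    constructor
    · intro b hb
      simp only [Finset.mem_filter, Finset.mem_univ, true_and] at hb ⊢
      exact hpre z z' b (hpath z z' h) hb
    · intro hsubset
      have : z' ∈ Finset.univ.filter (fun b => NegPath E Eneg z b) := by
        simp only [Finset.mem_filter, Finset.mem_univ, true_and]
        exact h
      have := hsubset this
      simp only [Finset.mem_filter, Finset.mem_univ, true_and] at this
      exact hstrat z' this
end

section
/- The refinement iteration terminates in at most |N| · |L| steps: starting from τ₀ = N × L and repeatedly removing a single element (n,z) with ¬check (n,z) τ, one reaches a correct typing after at most |N| · |L| removals, and if check is monotone, the resulting correct typing is independent of the order of removals and equals the maximal correct typing. -/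
/-- One refinement step: remove a single pair that fails `check` under the
current typing. -/
def Step {N L : Type*} [DecidableEq N] [DecidableEq L]
    (check : N × L → Set (N × L) → Prop) (τ τ' : Finset (N × L)) : Prop :=
  ∃ p ∈ τ, ¬ check p ↑τ ∧ τ' = τ.erase p

/-- The refinement iteration from the full typing terminates after at most
`|N| · |L|` removals, and with monotone `check`, any correct typing reached
from the full typing by such removals equals the maximal correct typing
(the union of all correct typings), independently of the removal order. -/
theorem refinement_terminates_and_confluent {N L : Type*}
    [Fintype N] [Fintype L] [DecidableEq N] [DecidableEq L]
    (check : N × L → Set (N × L) → Prop)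
    (hmono : ∀ p (σ σ' : Set (N × L)), σ ⊆ σ' → check p σ → check p σ') :
    (∀ (f : ℕ → Finset (N × L)) (k : ℕ), f 0 = Finset.univ →
      (∀ i < k, Step check (f i) (f (i + 1))) →
      k ≤ Fintype.card N * Fintype.card L) ∧
    (∀ τ : Finset (N × L),
      Relation.ReflTransGen (Step check) Finset.univ τ →
      (∀ p ∈ τ, check p ↑τ) →
      (↑τ : Set (N × L)) = ⋃₀ {σ : Set (N × L) | ∀ p ∈ σ, check p σ}) := by
  constructor
  · intro f k h0 hstep
    have key : ∀ i ≤ k, i + (f i).card ≤ (f 0).card := by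
      intro i hi
      induction i with
      | zero => simp
      | succ n ih =>
        obtain ⟨p, hp, -, heq⟩ := hstep n (by omega)
        have hlt : (f (n + 1)).card < (f n).card := by
          rw [heq]
          exact Finset.card_erase_lt_of_mem hp
        have := ih (by omega)
        omega
    have := key k le_rfl
    have hcard : (f 0).card = Fintype.card N * Fintype.card L := by
      rw [h0, Finset.card_univ, Fintype.card_prod]
    omega
  · intro τ hreach hcorrect
    have inv : ∀ σ ∈ {σ : Set (N × L) | ∀ p ∈ σ, check p σ}, σ ⊆ ↑τ := by
      intro σ hσ
      clear hcorrect
      induction hreach with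
      | refl => intro q _; simp
      | tail _ hst ih =>
        obtain ⟨p, hp, hpc, heq⟩ := hst
        intro q hq
        rw [heq]
        have hqτ := ih hq
        simp only [Finset.coe_erase, Set.mem_diff, Set.mem_singleton_iff]
        refine ⟨hqτ, ?_⟩
        rintro rfl
        exact hpc (hmono q σ _ ih (hσ q hq))
    apply Set.Subset.antisymm
    · exact Set.subset_sUnion_of_mem hcorrect
    · exact Set.sUnion_subset inv
end

section
/- Stratified greatest-fixed-point computation is well-defined: let L be partitioned into strata L₁,…,L_k and suppose check (n,z) τ for z ∈ L_i depends only on τ restricted to L₁ ∪ … ∪ L_i, and is monotone on that restriction when the part on L₁ ∪ … ∪ L_{i-1} is held fixed. Then the typings τ_i defined by τ₁ = union of all correct typings over L₁, and τ_{i+1} = union of all correct typings over L₁ ∪ … ∪ L_{i+1} whose restriction to L₁ ∪ … ∪ L_i equals τ_i, satisfy: each τ_i is itself a correct typing over L₁ ∪ … ∪ L_i. -/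
/-- A typing is correct if every node–label pair it contains is validated by
`check` relative to the typing itself. -/
def Correct {N L : Type*} (check : N × L → Set (N × L) → Prop)
    (τ : Set (N × L)) : Prop :=
  ∀ p ∈ τ, check p τ

/-- Restriction of a typing to labels on stratum at most `i`. -/
def restLe {N L : Type*} (lab : L → ℕ) (τ : Set (N × L)) (i : ℕ) : Set (N × L) :=
  {p ∈ τ | lab p.2 ≤ i}

/-- Restriction of a typing to labels on stratum strictly below `i`. -/
def restLt {N L : Type*} (lab : L → ℕ) (τ : Set (N × L)) (i : ℕ) : Set (N × L) :=
  {p ∈ τ | lab p.2 < i}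

/-- Restriction of a typing to labels on stratum exactly `i`. -/
def restEq {N L : Type*} (lab : L → ℕ) (τ : Set (N × L)) (i : ℕ) : Set (N × L) :=
  {p ∈ τ | lab p.2 = i}

/-- The stratified sequence of typings: `tauSeq 0` is the union of all correct
typings over the first stratum, and `tauSeq (i+1)` is the union of all correct
typings over the strata up to `i+1` whose restriction to strata up to `i`
equals `tauSeq i`. -/
def tauSeq {N L : Type*} (check : N × L → Set (N × L) → Prop) (lab : L → ℕ) :
    ℕ → Set (N × L)
  | 0 => ⋃₀ {τ | (∀ p ∈ τ, lab p.2 ≤ 0) ∧ Correct check τ}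
  | i + 1 => ⋃₀ {τ | (∀ p ∈ τ, lab p.2 ≤ i + 1) ∧ Correct check τ ∧
      restLe lab τ i = tauSeq check lab i}

/-- Stratified greatest-fixed-point computation is well-defined: under locality
and stratified monotonicity of `check`, each `tauSeq i` is a correct typing
over the strata up to `i`. -/
theorem tauSeq_correct {N L : Type*} [Fintype N] [Fintype L]
    (check : N × L → Set (N × L) → Prop) (lab : L → ℕ)
    (hloc : ∀ (p : N × L) (τ τ' : Set (N × L)),
      restLe lab τ (lab p.2) = restLe lab τ' (lab p.2) → (check p τ ↔ check p τ'))
    (hmono : ∀ (p : N × L) (τ τ' : Set (N × L)),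
      restLt lab τ (lab p.2) = restLt lab τ' (lab p.2) →
      restEq lab τ (lab p.2) ⊆ restEq lab τ' (lab p.2) →
      check p τ → check p τ') :
    ∀ i : ℕ, (∀ p ∈ tauSeq check lab i, lab p.2 ≤ i) ∧
      Correct check (tauSeq check lab i) := by

  intro i
  induction i with
  | zero =>
    constructor
    · rintro p ⟨τ, ⟨hb, hc⟩, hpτ⟩
      exact hb p hpτ
    · rintro p ⟨τ, ⟨hb, hc⟩, hpτ⟩
      have h0 : lab p.2 = 0 := Nat.le_zero.mp (hb p hpτ)
      refine hmono p τ _ ?_ ?_ (hc p hpτ)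
      · ext q
        simp [restLt, h0]
      · rintro q ⟨hq, he⟩
        exact ⟨⟨τ, ⟨hb, hc⟩, hq⟩, he⟩
  | succ i ih =>
    have hsub : tauSeq check lab i ⊆ tauSeq check lab (i + 1) := by
      intro p hp
      refine ⟨tauSeq check lab i, ⟨fun q hq => le_trans (ih.1 q hq) (by omega), ih.2, ?_⟩, hp⟩
      ext q
      simp only [restLe, Set.mem_setOf_eq, Set.mem_sep_iff, and_iff_left_iff_imp]
      exact fun hq => ih.1 q hq
    have hrest : restLe lab (tauSeq check lab (i + 1)) i = tauSeq check lab i := by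
      ext q
      constructor
      · rintro ⟨⟨τ, ⟨hb, hc, hr⟩, hqτ⟩, hle⟩
        rw [← hr]; exact ⟨hqτ, hle⟩
      · intro hq; exact ⟨hsub hq, ih.1 q hq⟩
    constructor
    · rintro p ⟨τ, ⟨hb, hc, hr⟩, hpτ⟩
      exact hb p hpτ
    · rintro p ⟨τ, ⟨hb, hc, hr⟩, hpτ⟩
      have hτsub : τ ⊆ tauSeq check lab (i + 1) := fun q hq => ⟨τ, ⟨hb, hc, hr⟩, hq⟩
      by_cases h : lab p.2 = i + 1
      · refine hmono p τ _ ?_ ?_ (hc p hpτ)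
        · have e1 : ∀ σ : Set (N × L), restLt lab σ (i + 1) = restLe lab σ i := by
            intro σ; ext q; simp [restLt, restLe, Nat.lt_succ_iff]
          rw [h, e1, e1, hr, hrest]
        · rintro q ⟨hq, he⟩
          exact ⟨hτsub hq, he⟩
      · have hle : lab p.2 ≤ i := by have := hb p hpτ; omega
        refine (hloc p τ _ ?_).mp (hc p hpτ)
        have key : ∀ σ : Set (N × L), restLe lab (restLe lab σ i) (lab p.2) =
            restLe lab σ (lab p.2) := by
          intro σ; ext q
          simp only [restLe, Set.mem_setOf_eq, Set.mem_sep_iff]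
          constructor
          · rintro ⟨⟨h1, h2⟩, h3⟩; exact ⟨h1, h3⟩
          · rintro ⟨h1, h3⟩; exact ⟨⟨h1, le_trans h3 hle⟩, h3⟩
        calc restLe lab τ (lab p.2)
            = restLe lab (restLe lab τ i) (lab p.2) := (key τ).symm
          _ = restLe lab (restLe lab (tauSeq check lab (i + 1)) i) (lab p.2) := by
              rw [hr, hrest]
          _ = restLe lab (tauSeq check lab (i + 1)) (lab p.2) := key _
end
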